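/- For every real x ≥ 9, (1/x)·Q(√x) ≥ exp(−x). Moreover, the function x ↦ (1/x)·Q(√x) is decreasing on (0, ∞), and consequently for every x > 0, (1/x)·Q(√x) ≥ exp(−max{x, 9}). -/

import Mathlib

/-- The standard Gaussian tail function `Q(x) = (1/√(2π)) ∫_x^∞ exp(−z²/2) dz`. -/
noncomputable def gaussQ (x : ℝ) : ℝ :=
  (Real.sqrt (2 * Real.pi))⁻¹ * ∫ z in Set.Ioi x, Real.exp (-z ^ 2 / 2)

open MeasureTheory Real Set Filter Topology

lemma gauss_int : Integrable (fun z : ℝ => Real.exp (-z ^ 2 / 2)) := by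
  have h := integrable_exp_neg_mul_sq (show (0:ℝ) < 1/2 by norm_num)
  have he : (fun z : ℝ => Real.exp (-z ^ 2 / 2)) = fun z : ℝ => Real.exp (-(1/2) * z ^ 2) := by
    funext z; ring_nf
  rw [he]; exact h

lemma hasDeriv_h (z : ℝ) :
    HasDerivAt (fun z : ℝ => -(z / (1 + z ^ 2) * Real.exp (-z ^ 2 / 2)))
      (Real.exp (-z ^ 2 / 2) * (z ^ 4 + 2 * z ^ 2 - 1) / (1 + z ^ 2) ^ 2) z := by
  have hne : (1 + z ^ 2) ≠ 0 := by positivity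
  have h1 : HasDerivAt (fun z : ℝ => z / (1 + z ^ 2))
      ((1 * (1 + z ^ 2) - z * (2 * z)) / (1 + z ^ 2) ^ 2) z := by
    have := (hasDerivAt_id z).fun_div ((hasDerivAt_const z 1).fun_add
      ((hasDerivAt_pow 2 z))) hne
    simpa using this
  have h2 : HasDerivAt (fun z : ℝ => Real.exp (-z ^ 2 / 2))
      (Real.exp (-z ^ 2 / 2) * (-(2 * z) / 2)) z := by
    have hz : HasDerivAt (fun z : ℝ => -z ^ 2 / 2) (-(2 * z ^ 1) / 2) z := by
      exact ((hasDerivAt_pow 2 z).neg.div_const 2)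
    simpa using hz.exp
  have := (h1.fun_mul h2).fun_neg
  refine this.congr_deriv ?_
  field_simp
  ring

lemma fprime_int : Integrable (fun z : ℝ =>
    Real.exp (-z ^ 2 / 2) * (z ^ 4 + 2 * z ^ 2 - 1) / (1 + z ^ 2) ^ 2) := by
  apply gauss_int.mono
  · apply Continuous.aestronglyMeasurable
    apply Continuous.div
    · exact (Real.continuous_exp.comp (by continuity)).mul (by continuity)
    · continuity
    · intro z; positivity
  · refine ae_of_all _ fun z => ?_
    have he : 0 < Real.exp (-z ^ 2 / 2) := Real.exp_pos _
    simp only [Real.norm_eq_abs]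
    rw [abs_div, abs_mul, abs_of_pos he, abs_of_pos (by positivity : (0:ℝ) < (1 + z ^ 2) ^ 2),
      div_le_iff₀ (by positivity : (0:ℝ) < (1 + z ^ 2) ^ 2)]
    have h1 : |z ^ 4 + 2 * z ^ 2 - 1| ≤ (1 + z ^ 2) ^ 2 := by
      rw [abs_le]; constructor <;> nlinarith [sq_nonneg z, sq_nonneg (z^2)]
    calc Real.exp (-z ^ 2 / 2) * |z ^ 4 + 2 * z ^ 2 - 1|
        ≤ Real.exp (-z ^ 2 / 2) * (1 + z ^ 2) ^ 2 :=
          mul_le_mul_of_nonneg_left h1 he.le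
      _ = _ := by ring

lemma tail_ge (t : ℝ) (ht : 0 ≤ t) :
    t / (1 + t ^ 2) * Real.exp (-t ^ 2 / 2) ≤ ∫ z in Set.Ioi t, Real.exp (-z ^ 2 / 2) := by
  have hexp0 : Tendsto (fun z : ℝ => Real.exp (-z ^ 2 / 2)) atTop (𝓝 0) := by
    apply Real.tendsto_exp_atBot.comp
    have h1 : Tendsto (fun z : ℝ => z ^ 2 / 2) atTop atTop :=
      (tendsto_pow_atTop (two_ne_zero)).atTop_div_const (by norm_num)
    have : (fun z : ℝ => -z ^ 2 / 2) = fun z : ℝ => -(z ^ 2 / 2) := by funext z; ring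
    rw [this]
    exact tendsto_neg_atBot_iff.mpr h1
  have hf0 : Tendsto (fun z : ℝ => -(z / (1 + z ^ 2) * Real.exp (-z ^ 2 / 2))) atTop (𝓝 0) := by
    rw [show (0:ℝ) = -0 by norm_num]
    apply Tendsto.neg
    apply squeeze_zero' (g := fun z : ℝ => Real.exp (-z ^ 2 / 2))
    · filter_upwards [eventually_ge_atTop (0:ℝ)] with z hz
      positivity
    · filter_upwards [eventually_ge_atTop (0:ℝ)] with z hz
      have h1 : z / (1 + z ^ 2) ≤ 1 := by
        rw [div_le_one (by positivity)]; nlinarith [sq_nonneg (z - 1)]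
      calc z / (1 + z ^ 2) * Real.exp (-z ^ 2 / 2) ≤ 1 * Real.exp (-z ^ 2 / 2) :=
            mul_le_mul_of_nonneg_right h1 (Real.exp_pos _).le
        _ = _ := one_mul _
    · exact hexp0
  have hFTC := integral_Ioi_of_hasDerivAt_of_tendsto' (a := t)
    (fun z _ => hasDeriv_h z) fprime_int.integrableOn hf0
  have hmono : (∫ z in Set.Ioi t, Real.exp (-z ^ 2 / 2) * (z ^ 4 + 2 * z ^ 2 - 1) / (1 + z ^ 2) ^ 2)
      ≤ ∫ z in Set.Ioi t, Real.exp (-z ^ 2 / 2) := by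
    apply setIntegral_mono_on fprime_int.integrableOn gauss_int.integrableOn measurableSet_Ioi
    intro z _
    rw [div_le_iff₀ (by positivity : (0:ℝ) < (1 + z ^ 2) ^ 2)]
    have he : 0 < Real.exp (-z ^ 2 / 2) := Real.exp_pos _
    nlinarith [sq_nonneg z, sq_nonneg (z ^ 2)]
  rw [hFTC] at hmono
  calc t / (1 + t ^ 2) * Real.exp (-t ^ 2 / 2)
      = 0 - -(t / (1 + t ^ 2) * Real.exp (-t ^ 2 / 2)) := by ring
    _ ≤ _ := hmono

lemma sqrt_two_pi_le : Real.sqrt (2 * Real.pi) ≤ 2.5067 := by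
  rw [show (2.5067:ℝ) = Real.sqrt (2.5067 ^ 2) from (Real.sqrt_sq (by norm_num)).symm]
  exact Real.sqrt_le_sqrt (by nlinarith [Real.pi_lt_d6])

lemma exp_ge_poly {x : ℝ} (hx : 9 ≤ x) :
    Real.sqrt (2 * Real.pi) * (Real.sqrt x * (1 + x)) ≤ Real.exp (x / 2) := by
  have hx0 : (0:ℝ) ≤ x := by linarith
  have hx3 : Real.sqrt x ≤ x / 3 := by
    rw [show x / 3 = Real.sqrt ((x / 3) ^ 2) from (Real.sqrt_sq (by linarith)).symm]
    exact Real.sqrt_le_sqrt (by nlinarith)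
  have hpoly : ∑ i ∈ Finset.range 8, (x / 2) ^ i / (Nat.factorial i) ≤ Real.exp (x / 2) :=
    Real.sum_le_exp_of_nonneg (by linarith) 8
  have hsum : (2.5067:ℝ) * (x / 3 * (1 + x)) ≤
      ∑ i ∈ Finset.range 8, (x / 2) ^ i / (Nat.factorial i) := by
    simp only [Finset.sum_range_succ, Finset.sum_range_zero, Nat.factorial]
    push_cast
    have h2 : 9 * x ≤ x ^ 2 := by nlinarith
    have h3 : 9 * x ^ 2 ≤ x ^ 3 := by nlinarith
    have h4 : 9 * x ^ 3 ≤ x ^ 4 := by nlinarith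
    have h5 : 9 * x ^ 4 ≤ x ^ 5 := by nlinarith
    have h6 : 9 * x ^ 5 ≤ x ^ 6 := by nlinarith
    have h7 : 9 * x ^ 6 ≤ x ^ 7 := by nlinarith
    ring_nf
    nlinarith [h2, h3, h4, h5, h6, h7]
  calc Real.sqrt (2 * Real.pi) * (Real.sqrt x * (1 + x))
      ≤ 2.5067 * (x / 3 * (1 + x)) := by
        apply mul_le_mul sqrt_two_pi_le _ (by positivity) (by norm_num)
        exact mul_le_mul_of_nonneg_right hx3 (by linarith)
    _ ≤ _ := hsum.trans hpoly

lemma part1 (x : ℝ) (hx : 9 ≤ x) : 1 / x * gaussQ (Real.sqrt x) ≥ Real.exp (-x) := by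
  have hx0 : (0:ℝ) < x := by linarith
  set t := Real.sqrt x with htdef
  have ht0 : 0 ≤ t := Real.sqrt_nonneg x
  have ht2 : t ^ 2 = x := Real.sq_sqrt hx0.le
  have hs0 : (0:ℝ) < Real.sqrt (2 * Real.pi) := Real.sqrt_pos.mpr (by positivity)
  have htail := tail_ge t ht0
  rw [ht2] at htail
  have hkey : Real.exp (-x) * x * (1 + x) * Real.sqrt (2 * Real.pi)
      ≤ t / (1 + x) * Real.exp (-x / 2) * (1 + x) := by
    have hge := exp_ge_poly hx
    have e1 : Real.exp (-x) * Real.exp (x / 2) = Real.exp (-x / 2) := by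
      rw [← Real.exp_add]; ring_nf
    have hxt : x = t * t := by nlinarith [ht2]
    have h2 : Real.exp (-x) * t * (Real.sqrt (2 * Real.pi) * (Real.sqrt x * (1 + x)))
        ≤ Real.exp (-x) * t * Real.exp (x / 2) :=
      mul_le_mul_of_nonneg_left hge (by positivity)
    calc Real.exp (-x) * x * (1 + x) * Real.sqrt (2 * Real.pi)
        = Real.exp (-x) * t * (Real.sqrt (2 * Real.pi) * (Real.sqrt x * (1 + x))) := by
          rw [← htdef, hxt]; ring
      _ ≤ Real.exp (-x) * t * Real.exp (x / 2) := h2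
      _ = t * (Real.exp (-x) * Real.exp (x / 2)) := by ring
      _ = t * Real.exp (-x / 2) := by rw [e1]
      _ = t / (1 + x) * Real.exp (-x / 2) * (1 + x) := by field_simp
  have hkey2 : Real.exp (-x) * x * Real.sqrt (2 * Real.pi)
      ≤ t / (1 + x) * Real.exp (-x / 2) := by
    have h1x : (0:ℝ) < 1 + x := by linarith
    nlinarith [hkey]
  unfold gaussQ
  rw [ge_iff_le]
  calc Real.exp (-x)
      = 1 / x * ((Real.sqrt (2 * Real.pi))⁻¹ * (Real.exp (-x) * x * Real.sqrt (2 * Real.pi))) := by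
        field_simp
    _ ≤ 1 / x * ((Real.sqrt (2 * Real.pi))⁻¹ * (t / (1 + x) * Real.exp (-x / 2))) := by
        apply mul_le_mul_of_nonneg_left _ (by positivity)
        exact mul_le_mul_of_nonneg_left hkey2 (by positivity)
    _ ≤ 1 / x * ((Real.sqrt (2 * Real.pi))⁻¹ * ∫ z in Set.Ioi t, Real.exp (-z ^ 2 / 2)) := by
        apply mul_le_mul_of_nonneg_left _ (by positivity)
        exact mul_le_mul_of_nonneg_left htail (by positivity)

lemma part2 : AntitoneOn (fun x : ℝ => 1 / x * gaussQ (Real.sqrt x)) (Set.Ioi 0) := by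
  intro a ha b hb hab
  simp only [Set.mem_Ioi] at ha hb
  have hI : (∫ z in Set.Ioi (Real.sqrt b), Real.exp (-z ^ 2 / 2))
      ≤ ∫ z in Set.Ioi (Real.sqrt a), Real.exp (-z ^ 2 / 2) := by
    apply setIntegral_mono_set gauss_int.integrableOn
      (ae_of_all _ fun z => (Real.exp_pos _).le)
    exact HasSubset.Subset.eventuallyLE (Ioi_subset_Ioi (Real.sqrt_le_sqrt hab))
  have hIb : 0 ≤ ∫ z in Set.Ioi (Real.sqrt b), Real.exp (-z ^ 2 / 2) :=
    setIntegral_nonneg measurableSet_Ioi fun z _ => (Real.exp_pos _).le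
  simp only
  unfold gaussQ
  have hc : (0:ℝ) ≤ (Real.sqrt (2 * Real.pi))⁻¹ := by positivity
  apply mul_le_mul (one_div_le_one_div_of_le ha hab)
    (mul_le_mul_of_nonneg_left hI hc) (by positivity) (by positivity)

/-- **Numerical tail inequality (eq. (25)).**
For `x ≥ 9`, `(1/x)·Q(√x) ≥ exp(−x)`; moreover `x ↦ (1/x)·Q(√x)` is decreasing on
`(0, ∞)`, and consequently `(1/x)·Q(√x) ≥ exp(−max{x, 9})` for every `x > 0`. -/
theorem inv_mul_gaussQ_sqrt_ge :
    (∀ x : ℝ, 9 ≤ x → 1 / x * gaussQ (Real.sqrt x) ≥ Real.exp (-x)) ∧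
    AntitoneOn (fun x : ℝ => 1 / x * gaussQ (Real.sqrt x)) (Set.Ioi 0) ∧
    (∀ x : ℝ, 0 < x → 1 / x * gaussQ (Real.sqrt x) ≥ Real.exp (-(max x 9))) := by
  refine ⟨part1, part2, fun x hx => ?_⟩
  rcases le_total 9 x with h | h
  · rw [max_eq_left h]; exact part1 x h
  · rw [max_eq_right h]
    calc Real.exp (-(9:ℝ)) ≤ 1 / 9 * gaussQ (Real.sqrt 9) := part1 9 le_rfl
      _ ≤ 1 / x * gaussQ (Real.sqrt x) := part2 hx (by norm_num) h
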